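/- For jointly distributed discrete random variables X, Y, J on finite spaces with X independent of J, the conditional mutual information satisfies I(X;Y|J) ≤ I(X;Y) + H(J). -/

import Mathlib

/-- Shannon entropy (base 2) of a finite nonnegative vector (e.g. a pmf). -/
noncomputable def ent {α : Type*} [Fintype α] (f : α → ℝ) : ℝ :=
  -∑ a, f a * Real.logb 2 (f a)

noncomputable def entL {α : Type*} [Fintype α] (f : α → ℝ) : ℝ :=
  -∑ a, f a * Real.log (f a)

lemma ent_eq_entL {α : Type*} [Fintype α] (f : α → ℝ) :
    ent f = entL f / Real.log 2 := by
  unfold ent entL Real.logb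
  rw [neg_div, Finset.sum_div]
  congr 1
  apply Finset.sum_congr rfl
  intro a _; ring

lemma entL_comp_equiv {α β : Type*} [Fintype α] [Fintype β] (e : α ≃ β) (f : β → ℝ) :
    entL (fun a => f (e a)) = entL f := by
  unfold entL
  rw [Fintype.sum_equiv e (fun a => f (e a) * Real.log (f (e a)))
    (fun b => f b * Real.log (f b)) (fun a => rfl)]

/-- Gibbs: cross entropy ≥ entropy (log version). -/
lemma gibbs {α : Type*} [Fintype α] (f g : α → ℝ)
    (hf0 : ∀ a, 0 ≤ f a) (hg0 : ∀ a, 0 ≤ g a)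
    (hf1 : ∑ a, f a = 1) (hg1 : ∑ a, g a = 1)
    (hac : ∀ a, g a = 0 → f a = 0) :
    ∑ a, f a * Real.log (g a) ≤ ∑ a, f a * Real.log (f a) := by
  have key : ∀ a, f a * Real.log (g a) - f a * Real.log (f a) ≤ g a - f a := by
    intro a
    rcases eq_or_lt_of_le (hf0 a) with h | h
    · simp [← h]; exact hg0 a
    · have hg : 0 < g a := by
        rcases eq_or_lt_of_le (hg0 a) with h' | h'
        · exact absurd (hac a h'.symm) (ne_of_gt h)
        · exact h'
      have hlog : Real.log (g a / f a) ≤ g a / f a - 1 :=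
        Real.log_le_sub_one_of_pos (div_pos hg h)
      rw [Real.log_div (ne_of_gt hg) (ne_of_gt h)] at hlog
      have := mul_le_mul_of_nonneg_left hlog (le_of_lt h)
      calc f a * Real.log (g a) - f a * Real.log (f a)
          = f a * (Real.log (g a) - Real.log (f a)) := by ring
        _ ≤ f a * (g a / f a - 1) := this
        _ = g a - f a := by field_simp
  have h2 : ∑ a, (f a * Real.log (g a) - f a * Real.log (f a)) ≤ ∑ a, (g a - f a) :=
    Finset.sum_le_sum (fun a _ => key a)
  simp only [Finset.sum_sub_distrib, hf1, hg1] at h2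
  linarith

/-- Entropy of an independent product is the sum of entropies. -/
lemma entL_prod {α β : Type*} [Fintype α] [Fintype β] (f : α → ℝ) (g : β → ℝ)
    (hf0 : ∀ a, 0 ≤ f a) (hg0 : ∀ b, 0 ≤ g b)
    (hf1 : ∑ a, f a = 1) (hg1 : ∑ b, g b = 1) :
    entL (fun x : α × β => f x.1 * g x.2) = entL f + entL g := by
  have key : ∀ (a : α) (b : β), f a * g b * Real.log (f a * g b)
      = g b * (f a * Real.log (f a)) + f a * (g b * Real.log (g b)) := by
    intro a b
    rcases eq_or_ne (f a) 0 with h | h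
    · simp [h]
    rcases eq_or_ne (g b) 0 with h' | h'
    · simp [h']
    rw [Real.log_mul h h']; ring
  unfold entL
  rw [Fintype.sum_prod_type]
  simp only [key, Finset.sum_add_distrib]
  have e1 : ∑ a, ∑ b, g b * (f a * Real.log (f a))
      = ∑ a, f a * Real.log (f a) := by
    apply Finset.sum_congr rfl; intro a _
    rw [← Finset.sum_mul, hg1, one_mul]
  have e2 : ∑ a, ∑ b, f a * (g b * Real.log (g b))
      = ∑ a, f a * ∑ b, g b * Real.log (g b) := by
    apply Finset.sum_congr rfl; intro a _
    rw [Finset.mul_sum]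
  rw [e1, e2, ← Finset.sum_mul, hf1, one_mul]
  ring

/-- Monotonicity: entropy of a marginal is at most entropy of the joint. -/
lemma entL_marginal_le {α β : Type*} [Fintype α] [Fintype β] (r : α × β → ℝ)
    (h0 : ∀ x, 0 ≤ r x) :
    entL (fun a => ∑ b, r (a, b)) ≤ entL r := by
  set m : α → ℝ := fun a => ∑ b, r (a, b) with hm
  have hle : ∀ x : α × β, r x ≤ m x.1 := by
    intro x
    exact Finset.single_le_sum (f := fun b => r (x.1, b))
      (fun b _ => h0 _) (Finset.mem_univ x.2)
  have key : ∀ x : α × β, r x * Real.log (r x) ≤ r x * Real.log (m x.1) := by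
    intro x
    rcases eq_or_lt_of_le (h0 x) with h | h
    · simp [← h]
    · exact mul_le_mul_of_nonneg_left (Real.log_le_log h (hle x)) (le_of_lt h)
  have h1 : ∑ x : α × β, r x * Real.log (r x) ≤ ∑ x : α × β, r x * Real.log (m x.1) :=
    Finset.sum_le_sum (fun x _ => key x)
  have h2 : ∑ x : α × β, r x * Real.log (m x.1) = ∑ a, m a * Real.log (m a) := by
    rw [Fintype.sum_prod_type]
    apply Finset.sum_congr rfl; intro a _
    show ∑ y, r (a, y) * Real.log (m a) = _
    rw [← Finset.sum_mul]
  unfold entL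
  rw [← h2]
  linarith

/-- Subadditivity of entropy. -/
lemma entL_subadd {α β : Type*} [Fintype α] [Fintype β] (r : α × β → ℝ)
    (h0 : ∀ x, 0 ≤ r x) (h1 : ∑ x, r x = 1) :
    entL r ≤ entL (fun a => ∑ b, r (a, b)) + entL (fun b => ∑ a, r (a, b)) := by
  set f : α → ℝ := fun a => ∑ b, r (a, b) with hf
  set g : β → ℝ := fun b => ∑ a, r (a, b) with hg
  have hf0 : ∀ a, 0 ≤ f a := fun a => Finset.sum_nonneg fun b _ => h0 _
  have hg0 : ∀ b, 0 ≤ g b := fun b => Finset.sum_nonneg fun a _ => h0 _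
  have hf1 : ∑ a, f a = 1 := by rw [hf, ← h1, Fintype.sum_prod_type]
  have hg1 : ∑ b, g b = 1 := by
    rw [hg, ← h1, Fintype.sum_prod_type, Finset.sum_comm]
  have hlef : ∀ x : α × β, r x ≤ f x.1 := fun x =>
    Finset.single_le_sum (f := fun b => r (x.1, b)) (fun b _ => h0 _) (Finset.mem_univ x.2)
  have hleg : ∀ x : α × β, r x ≤ g x.2 := fun x =>
    Finset.single_le_sum (f := fun a => r (a, x.2)) (fun a _ => h0 _) (Finset.mem_univ x.1)
  have hq0 : ∀ x : α × β, 0 ≤ f x.1 * g x.2 := fun x => mul_nonneg (hf0 _) (hg0 _)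
  have hq1 : ∑ x : α × β, f x.1 * g x.2 = 1 := by
    rw [Fintype.sum_prod_type]
    have : ∀ a, ∑ b, f a * g b = f a := by
      intro a; rw [← Finset.mul_sum, hg1, mul_one]
    simp only [this, hf1]
  have hac : ∀ x : α × β, f x.1 * g x.2 = 0 → r x = 0 := by
    intro x hx
    rcases mul_eq_zero.mp hx with h | h
    · exact le_antisymm (h ▸ hlef x) (h0 x)
    · exact le_antisymm (h ▸ hleg x) (h0 x)
  have hgibbs := gibbs r (fun x => f x.1 * g x.2) h0 hq0 h1 hq1 hac
  have key : ∀ x : α × β, r x * Real.log (f x.1 * g x.2)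
      = r x * Real.log (f x.1) + r x * Real.log (g x.2) := by
    intro x
    rcases eq_or_lt_of_le (h0 x) with h | h
    · simp [← h]
    · have hfpos : f x.1 ≠ 0 := ne_of_gt (lt_of_lt_of_le h (hlef x))
      have hgpos : g x.2 ≠ 0 := ne_of_gt (lt_of_lt_of_le h (hleg x))
      rw [Real.log_mul hfpos hgpos]; ring
  have e1 : ∑ x : α × β, r x * Real.log (f x.1) = ∑ a, f a * Real.log (f a) := by
    rw [Fintype.sum_prod_type]
    apply Finset.sum_congr rfl; intro a _
    show ∑ y, r (a, y) * Real.log (f a) = _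
    rw [← Finset.sum_mul]
  have e2 : ∑ x : α × β, r x * Real.log (g x.2) = ∑ b, g b * Real.log (g b) := by
    rw [Fintype.sum_prod_type, Finset.sum_comm]
    apply Finset.sum_congr rfl; intro b _
    show ∑ x, r (x, b) * Real.log (g b) = _
    rw [← Finset.sum_mul]
  rw [show (∑ x : α × β, r x * Real.log (f x.1 * g x.2))
      = ∑ a, f a * Real.log (f a) + ∑ b, g b * Real.log (g b) by
    simp only [key, Finset.sum_add_distrib, e1, e2]] at hgibbs
  unfold entL
  linarith

/-- For jointly distributed finite random variables `X, Y, J`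
(joint pmf `p` on `A × B × C`) with `X` independent of `J`,
`I(X;Y|J) ≤ I(X;Y) + H(J)`, where
`I(X;Y|J) = H(X,J) − H(J) − H(X,Y,J) + H(Y,J)` and
`I(X;Y) = H(X) + H(Y) − H(X,Y)`. -/
theorem condMutualInfo_le_mutualInfo_add_entropy
    {A B C : Type*} [Fintype A] [Fintype B] [Fintype C]
    (p : A × B × C → ℝ)
    (hp0 : ∀ x, 0 ≤ p x) (hp1 : ∑ x, p x = 1)
    (hindep : ∀ a c, (∑ b, p (a, b, c)) =
      (∑ bc : B × C, p (a, bc.1, bc.2)) * (∑ ab : A × B, p (ab.1, ab.2, c))) :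
    (ent (fun ac : A × C => ∑ b, p (ac.1, b, ac.2))
        - ent (fun c : C => ∑ ab : A × B, p (ab.1, ab.2, c))
        - ent p
        + ent (fun bc : B × C => ∑ a, p (a, bc.1, bc.2)))
      ≤ (ent (fun a : A => ∑ bc : B × C, p (a, bc.1, bc.2))
        + ent (fun b : B => ∑ ac : A × C, p (ac.1, b, ac.2))
        - ent (fun ab : A × B => ∑ c, p (ab.1, ab.2, c)))
        + ent (fun c : C => ∑ ab : A × B, p (ab.1, ab.2, c)) := by
  have hL : (0:ℝ) < Real.log 2 := Real.log_pos one_lt_two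
  -- marginals
  have hX0 : ∀ a : A, 0 ≤ ∑ bc : B × C, p (a, bc.1, bc.2) :=
    fun a => Finset.sum_nonneg fun bc _ => hp0 _
  have hJ0 : ∀ c : C, 0 ≤ ∑ ab : A × B, p (ab.1, ab.2, c) :=
    fun c => Finset.sum_nonneg fun ab _ => hp0 _
  have hX1 : ∑ a : A, ∑ bc : B × C, p (a, bc.1, bc.2) = 1 := by
    rw [← hp1, Fintype.sum_prod_type]
  have hJ1 : ∑ c : C, ∑ ab : A × B, p (ab.1, ab.2, c) = 1 := by
    rw [← hp1]
    rw [Finset.sum_comm]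
    simp only [Fintype.sum_prod_type]
  -- independence: H(X,J) = H(X) + H(J)
  have hfun : (fun ac : A × C => ∑ b, p (ac.1, b, ac.2))
      = fun ac : A × C => (∑ bc : B × C, p (ac.1, bc.1, bc.2))
        * (∑ ab : A × B, p (ab.1, ab.2, ac.2)) :=
    funext fun ac => hindep ac.1 ac.2
  have hXJ : entL (fun ac : A × C => ∑ b, p (ac.1, b, ac.2))
      = entL (fun a : A => ∑ bc : B × C, p (a, bc.1, bc.2))
        + entL (fun c : C => ∑ ab : A × B, p (ab.1, ab.2, c)) := by
    rw [hfun]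
    exact entL_prod _ _ hX0 hJ0 hX1 hJ1
  -- monotonicity: H(X,Y) ≤ H(X,Y,J)
  have hmono : entL (fun ab : A × B => ∑ c, p (ab.1, ab.2, c)) ≤ entL p := by
    have h := entL_marginal_le (fun x : (A × B) × C => p (x.1.1, x.1.2, x.2))
      (fun x => hp0 _)
    have he : entL (fun x : (A × B) × C => p (x.1.1, x.1.2, x.2)) = entL p :=
      entL_comp_equiv (Equiv.prodAssoc A B C) p
    exact le_of_le_of_eq h he
  -- subadditivity: H(Y,J) ≤ H(Y) + H(J)
  have hsub : entL (fun bc : B × C => ∑ a, p (a, bc.1, bc.2))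
      ≤ entL (fun b : B => ∑ ac : A × C, p (ac.1, b, ac.2))
        + entL (fun c : C => ∑ ab : A × B, p (ab.1, ab.2, c)) := by
    have hr0 : ∀ bc : B × C, 0 ≤ ∑ a, p (a, bc.1, bc.2) :=
      fun bc => Finset.sum_nonneg fun a _ => hp0 _
    have hr1 : ∑ bc : B × C, ∑ a, p (a, bc.1, bc.2) = 1 := by
      rw [Finset.sum_comm, ← hp1, Fintype.sum_prod_type]
    have h := entL_subadd (fun bc : B × C => ∑ a, p (a, bc.1, bc.2)) hr0 hr1
    have e1 : (fun b : B => ∑ c : C, ∑ a : A, p (a, b, c))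
        = fun b : B => ∑ ac : A × C, p (ac.1, b, ac.2) := by
      funext b
      rw [Finset.sum_comm, Fintype.sum_prod_type]
    have e2 : (fun c : C => ∑ b : B, ∑ a : A, p (a, b, c))
        = fun c : C => ∑ ab : A × B, p (ab.1, ab.2, c) := by
      funext c
      rw [Finset.sum_comm, Fintype.sum_prod_type]
    calc entL (fun bc : B × C => ∑ a, p (a, bc.1, bc.2))
        ≤ entL (fun b : B => ∑ c : C, ∑ a : A, p (a, b, c))
          + entL (fun c : C => ∑ b : B, ∑ a : A, p (a, b, c)) := h
      _ = _ := by rw [e1, e2]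
  -- conclude
  simp only [ent_eq_entL]
  rw [show entL (fun ac : A × C => ∑ b, p (ac.1, b, ac.2)) / Real.log 2
        - entL (fun c : C => ∑ ab : A × B, p (ab.1, ab.2, c)) / Real.log 2
        - entL p / Real.log 2
        + entL (fun bc : B × C => ∑ a, p (a, bc.1, bc.2)) / Real.log 2
      = (entL (fun ac : A × C => ∑ b, p (ac.1, b, ac.2))
        - entL (fun c : C => ∑ ab : A × B, p (ab.1, ab.2, c))
        - entL p
        + entL (fun bc : B × C => ∑ a, p (a, bc.1, bc.2))) / Real.log 2 from by ring,
    show (entL (fun a : A => ∑ bc : B × C, p (a, bc.1, bc.2)) / Real.log 2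
        + entL (fun b : B => ∑ ac : A × C, p (ac.1, b, ac.2)) / Real.log 2
        - entL (fun ab : A × B => ∑ c, p (ab.1, ab.2, c)) / Real.log 2)
        + entL (fun c : C => ∑ ab : A × B, p (ab.1, ab.2, c)) / Real.log 2
      = ((entL (fun a : A => ∑ bc : B × C, p (a, bc.1, bc.2))
        + entL (fun b : B => ∑ ac : A × C, p (ac.1, b, ac.2))
        - entL (fun ab : A × B => ∑ c, p (ab.1, ab.2, c)))
        + entL (fun c : C => ∑ ab : A × B, p (ab.1, ab.2, c))) / Real.log 2 from by ring]
  rw [div_le_div_iff_of_pos_right hL]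
  linarith
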